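/- Let γ be an antiproper edge coloring of the signed graph Σ = (Γ, σ). Then for every nonzero magnitude a, the spanning subgraph Σ_a consisting of the edges all of whose incidences are colored +a or −a is antibalanced (every circle contained in Σ_a has sign (−1)^{length}). Conversely, every antibalanced signed graph admits an antiproper edge coloring using only the two colors +a and −a. -/

import Mathlib

open SimpleGraph

/-- An edge coloring of the signed graph `(G, σ)` with (arbitrary) signed colors:
an assignment of integers to the incidences of `G` such that
`γ(v,e) = -σ(e)·γ(w,e)` for each edge `e : vw`. -/
structure PColoring {V : Type*} (G : SimpleGraph V) (σ : Sym2 V → ℤ) where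
  col : V → Sym2 V → ℤ
  compat : ∀ ⦃v w : V⦄, G.Adj v w → col v s(v, w) = -σ s(v, w) * col w s(v, w)

/-- A coloring is antiproper if `γ(v,e) ≠ -γ(v,f)` for distinct edges `e, f` incident
to a common vertex `v`. -/
def PColoring.Antiproper {V : Type*} {G : SimpleGraph V} {σ : Sym2 V → ℤ}
    (c : PColoring G σ) : Prop :=
  ∀ ⦃v w x : V⦄, G.Adj v w → G.Adj v x → w ≠ x →
    c.col v s(v, w) ≠ -c.col v s(v, x)

/-- The magnitude graph `Σ_a`: the spanning subgraph of `G` consisting of the edges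
all of whose incidences are colored `+a` or `-a`. -/
def magGraph {V : Type*} (G : SimpleGraph V) (col : V → Sym2 V → ℤ) (a : ℤ) :
    SimpleGraph V where
  Adj v w := G.Adj v w ∧ (col v s(v, w) = a ∨ col v s(v, w) = -a) ∧
    (col w s(v, w) = a ∨ col w s(v, w) = -a)
  symm := ⟨by
    rintro v w ⟨h1, h2, h3⟩
    exact ⟨h1.symm, by rwa [Sym2.eq_swap], by rwa [Sym2.eq_swap]⟩⟩
  loopless := ⟨fun v h => G.loopless.irrefl v h.1⟩

/- ### Auxiliary lemmas -/

lemma myProdPM : ∀ (l : List ℤ), (∀ x ∈ l, x = 1 ∨ x = -1) → l.prod = 1 ∨ l.prod = -1 := by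
  intro l
  induction l with
  | nil => intro _; simp
  | cons x t ih =>
    intro h
    rcases h x (by simp) with hx | hx <;>
      rcases ih (fun y hy => h y (List.mem_cons_of_mem _ hy)) with ht | ht <;>
      simp [hx, ht]

lemma myMapNeg {V : Type*} (σ : Sym2 V → ℤ) :
    ∀ (l : List (Sym2 V)),
      (l.map (fun e => -σ e)).prod = (-1) ^ l.length * (l.map σ).prod := by
  intro l
  induction l with
  | nil => simp
  | cons e t ih =>
    simp only [List.map_cons, List.prod_cons, List.length_cons, ih, pow_succ]
    ring

/-- In a path, distinct indices give distinct vertices. -/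
lemma myGetVertNe {V : Type*} {G : SimpleGraph V} {w u : V} (P : G.Walk w u) :
    P.IsPath → ∀ i j : ℕ, i < j → j ≤ P.length → P.getVert i ≠ P.getVert j := by
  induction P with
  | nil => intro _ i j hij hj; rw [Walk.length_nil] at hj; omega
  | cons h Q ih =>
    intro hP i j hij hj
    rw [Walk.cons_isPath_iff] at hP
    rw [Walk.length_cons] at hj
    cases j with
    | zero => omega
    | succ j =>
      cases i with
      | zero =>
        rw [Walk.getVert_zero, Walk.getVert_cons_succ]
        intro hEq
        exact hP.2 (Walk.mem_support_iff_exists_getVert.mpr ⟨j, hEq.symm, by omega⟩)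
      | succ i =>
        rw [Walk.getVert_cons_succ, Walk.getVert_cons_succ]
        exact ih hP.1 i j (by omega) (by omega)

/-- A path from `w` to `u` containing the edge `s(u,w)` is a single edge. -/
lemma myPathEdge {V : Type*} {G : SimpleGraph V} {w u : V} (P : G.Walk w u)
    (hP : P.IsPath) (hne : u ≠ w) (he : s(u, w) ∈ P.edges) :
    ∃ h' : G.Adj w u, P = Walk.cons h' Walk.nil := by
  cases P with
  | nil => simp at he
  | cons h2 Q =>
    rw [Walk.cons_isPath_iff] at hP
    rw [Walk.edges_cons, List.mem_cons] at he
    rcases he with he | he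
    · rw [Sym2.eq_iff] at he
      rcases he with ⟨h3, h4⟩ | ⟨h3, h4⟩
      · exact absurd h3 hne
      · subst h3
        have hQ : Q = Walk.nil := by
          cases Q with
          | nil => rfl
          | cons h5 Q2 =>
            rw [Walk.cons_isPath_iff] at hP
            exact absurd (Q2.end_mem_support) (by
              have h6 := hP.1.2
              simp at h6)
        subst hQ
        exact ⟨h2, rfl⟩
    · exact absurd (Walk.snd_mem_support_of_mem_edges Q he) hP.2

/-- Extension of the cycle-sign hypothesis to all closed walks. -/
lemma myClosed {V : Type*} (G : SimpleGraph V) (σ : Sym2 V → ℤ)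
    (hσ : ∀ e ∈ G.edgeSet, σ e = 1 ∨ σ e = -1)
    (hcyc : ∀ (v : V) (W : G.Walk v v), W.IsCycle → (W.edges.map σ).prod = (-1) ^ W.length) :
    ∀ (n : ℕ) (v : V) (W : G.Walk v v), W.length ≤ n →
      (W.edges.map σ).prod = (-1) ^ W.length := by
  classical
  intro n
  induction n with
  | zero =>
    intro v W hW
    have hnil : W = Walk.nil := Walk.nil_iff_eq_nil.mp (Walk.nil_iff_length_eq.mpr (by omega))
    subst hnil; simp
  | succ n ih =>
    intro v W hW
    rcases Nat.lt_or_ge n W.length with hlen | hlen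
    swap
    · exact ih v W hlen
    have hlen' : W.length = n + 1 := by omega
    by_cases hc : W.IsCycle
    · exact hcyc v W hc
    by_cases hnd : W.support.tail.Nodup
    · -- backtracking case: length 2
      obtain ⟨m, h, P, rfl⟩ := (Walk.not_nil_iff (p := W)).mp
        (by rw [Walk.nil_iff_length_eq]; omega)
      have hsupp : P.support.Nodup := by simpa using hnd
      have hPp : P.IsPath := (Walk.isPath_def P).mpr hsupp
      have hmem : s(v, m) ∈ P.edges := by
        by_contra hn2
        exact hc ((Walk.cons_isCycle_iff P h).mpr ⟨hPp, hn2⟩)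
      obtain ⟨h', rfl⟩ := myPathEdge P hPp h.ne hmem
      simp only [Walk.edges_cons, Walk.edges_nil, List.map_cons, List.map_nil,
        List.prod_cons, List.prod_nil, Walk.length_cons, Walk.length_nil, mul_one]
      rw [show s(m, v) = s(v, m) from Sym2.eq_swap]
      rcases hσ s(v, m) (by simpa using h) with h1 | h1 <;> rw [h1] <;> norm_num
    · -- split at a repeated vertex
      obtain ⟨x, hxdup⟩ := List.exists_duplicate_iff_not_nodup.mpr hnd
      have hxc : 2 ≤ W.support.tail.count x := List.duplicate_iff_two_le_count.mp hxdup
      have hxs : x ∈ W.support := List.mem_of_mem_tail hxdup.mem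
      have hRe := W.rotate_edges x hxs
      have hRt := Walk.support_rotate W x hxs
      have hRlen : (W.rotate x hxs).length = W.length := by
        have h1 := hRe.perm.length_eq
        rwa [Walk.length_edges, Walk.length_edges] at h1
      have hprodeq : ((W.rotate x hxs).edges.map σ).prod = (W.edges.map σ).prod :=
        ((hRe.map σ)).perm.prod_eq
      set R := W.rotate x hxs with hR
      have hcount : 2 ≤ R.support.tail.count x := by
        rw [hRt.perm.count_eq]; exact hxc
      have hRnil : ¬ R.Nil := by
        rw [Walk.nil_iff_length_eq]; omega
      obtain ⟨y, h4, R2, hR2⟩ := (Walk.not_nil_iff (p := R)).mp hRnil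
      have hcount2 : 2 ≤ R2.support.count x := by
        rw [hR2] at hcount; simpa using hcount
      have hxR2 : x ∈ R2.support := R2.end_mem_support
      set T := R2.takeUntil x hxR2 with hT
      set D := R2.dropUntil x hxR2 with hD
      have hspec : T.append D = R2 := R2.take_spec hxR2
      have hcT : T.support.count x = 1 := R2.count_support_takeUntil_eq_one hxR2
      have hcD : 1 ≤ D.support.tail.count x := by
        have h5 := hcount2
        rw [← hspec, Walk.support_append, List.count_append, hcT] at h5
        omega
      have hDnil : ¬ D.Nil := by
        intro hDn
        rw [Walk.nil_iff_eq_nil] at hDn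
        rw [hDn] at hcD
        simp at hcD
      have hDlen : 1 ≤ D.length := by
        have h6 : D.length ≠ 0 := fun hh => hDnil (Walk.nil_iff_length_eq.mpr hh)
        omega
      have hsplit : R = (Walk.cons h4 T).append D := by
        rw [hR2, ← hspec, Walk.cons_append]
      have hconsT : (Walk.cons h4 T).length = T.length + 1 := Walk.length_cons _ _
      have hlenR : (Walk.cons h4 T).length + D.length = n + 1 := by
        have h7 := congrArg Walk.length hsplit
        rw [Walk.length_append] at h7
        omega
      have h5 := ih x (Walk.cons h4 T) (by omega)
      have h6 := ih x D (by omega)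
      calc (W.edges.map σ).prod = (R.edges.map σ).prod := hprodeq.symm
        _ = (((Walk.cons h4 T).append D).edges.map σ).prod := by rw [← hsplit]
        _ = ((Walk.cons h4 T).edges.map σ).prod * (D.edges.map σ).prod := by
              rw [Walk.edges_append, List.map_append, List.prod_append]
        _ = (-1) ^ (Walk.cons h4 T).length * (-1) ^ D.length := by rw [h5, h6]
        _ = (-1) ^ W.length := by rw [← pow_add, hlen', hlenR]

lemma myEdgeBase {V : Type*} {G : SimpleGraph V} {σ : Sym2 V → ℤ}
    (hσ : ∀ e ∈ G.edgeSet, σ e = 1 ∨ σ e = -1) {a : ℤ} {c : PColoring G σ} {v w : V}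
    (h : (magGraph G c.col a).Adj v w) :
    σ s(v, w) * c.col v s(v, w) * c.col w s(v, w) = -a ^ 2 := by
  have hG : G.Adj v w := h.1
  rcases hσ s(v, w) (by simpa using hG) with h1 | h1 <;>
    rcases h.2.2 with h2 | h2 <;> rw [c.compat hG, h1, h2] <;> ring

lemma myColEq {V : Type*} {G : SimpleGraph V} {σ : Sym2 V → ℤ} {a : ℤ}
    {c : PColoring G σ} (hap : c.Antiproper) {v w x : V}
    (h1 : G.Adj v w) (h2 : G.Adj v x) (hne : w ≠ x)
    (hw : c.col v s(v, w) = a ∨ c.col v s(v, w) = -a)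
    (hx : c.col v s(v, x) = a ∨ c.col v s(v, x) = -a) :
    c.col v s(v, w) = c.col v s(v, x) := by
  rcases hw with hw | hw <;> rcases hx with hx | hx
  · rw [hw, hx]
  · exact absurd (by rw [hw, hx, neg_neg]) (hap h1 h2 hne)
  · exact absurd (by rw [hw, hx]) (hap h1 h2 hne)
  · rw [hw, hx]

/-- Main induction for part 1: product formula along a path in the magnitude graph. -/
lemma myLemD {V : Type*} (G : SimpleGraph V) (σ : Sym2 V → ℤ)
    (hσ : ∀ e ∈ G.edgeSet, σ e = 1 ∨ σ e = -1) (a : ℤ) (ha : a ≠ 0)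
    (c : PColoring G σ) (hap : c.Antiproper) :
    ∀ {x y : V} (P : (magGraph G c.col a).Walk x y), P.IsPath → ¬ P.Nil →
      (magGraph G c.col a).Adj x (P.getVert 1) ∧
      (magGraph G c.col a).Adj (P.getVert (P.length - 1)) y ∧
      (P.edges.map σ).prod * c.col x s(x, P.getVert 1) *
        c.col y s(P.getVert (P.length - 1), y) = (-1) ^ P.length * a ^ 2 := by
  intro x y P
  induction P with
  | nil => intro _ hnil; simp at hnil
  | @cons x m y h Q ih =>
    intro hP _
    cases Q with
    | nil =>
      have hv1 : (Walk.cons h Walk.nil).getVert 1 = m :=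
        (Walk.getVert_cons_succ (n := 0) _ h).trans (Walk.getVert_zero _)
      have hlast : (Walk.cons h Walk.nil).length - 1 = 0 := by simp
      refine ⟨by rw [hv1]; exact h, by rw [hlast, Walk.getVert_zero]; exact h, ?_⟩
      rw [hv1, hlast, Walk.getVert_zero]
      simp only [Walk.edges_cons, Walk.edges_nil, List.map_cons, List.map_nil,
        List.prod_cons, List.prod_nil, Walk.length_cons, Walk.length_nil, mul_one, pow_one]
      linear_combination myEdgeBase hσ h
    | @cons _ m2 _ h' Q2 =>
      set K := Walk.cons h' Q2 with hK
      have hKpath : K.IsPath := hP.of_cons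
      obtain ⟨ih1, ih2, ih3⟩ := ih hKpath (Walk.not_nil_cons)
      have hKg1 : K.getVert 1 = m2 :=
        (Walk.getVert_cons_succ (n := 0) _ h').trans (Walk.getVert_zero _)
      rw [hKg1] at ih1 ih3
      have g1 : (Walk.cons h K).getVert 1 = m :=
        (Walk.getVert_cons_succ (n := 0) _ h).trans (Walk.getVert_zero _)
      have glast : (Walk.cons h K).getVert ((Walk.cons h K).length - 1) =
          K.getVert (K.length - 1) := by
        have hKl : K.length = Q2.length + 1 := Walk.length_cons _ _
        have h0 : (Walk.cons h K).length - 1 = (K.length - 1) + 1 := by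
          rw [Walk.length_cons]; omega
        rw [h0, Walk.getVert_cons_succ]
      -- x ≠ m2
      have hxm2 : x ≠ m2 := by
        rw [Walk.cons_isPath_iff] at hP
        intro hEq
        exact hP.2 (hEq ▸ (by rw [hK, Walk.support_cons]; exact
          List.mem_cons_of_mem _ Q2.start_mem_support))
      -- colors at m agree
      have hm_mx : c.col m s(m, x) = a ∨ c.col m s(m, x) = -a := by
        have h8 := h.2.2
        rwa [show s(x, m) = s(m, x) from Sym2.eq_swap] at h8
      have hceq : c.col m s(m, x) = c.col m s(m, m2) :=
        myColEq hap h.1.symm h'.1 hxm2 hm_mx h'.2.1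
      rw [← hceq, show s(m, x) = s(x, m) from Sym2.eq_swap] at ih3
      refine ⟨by rw [g1]; exact h, by rw [glast]; exact ih2, ?_⟩
      rw [g1, glast]
      simp only [Walk.edges_cons, List.map_cons, List.prod_cons, Walk.length_cons]
      have hbase := myEdgeBase hσ h
      have hCm2 : c.col m s(x, m) * c.col m s(x, m) = a ^ 2 := by
        rcases h.2.2 with h2 | h2 <;> rw [h2] <;> ring
      refine mul_right_cancel₀ (b := c.col m s(x, m) * c.col m s(x, m))
        (by rw [hCm2]; exact pow_ne_zero 2 ha) ?_
      linear_combination ((K.edges.map σ).prod * c.col m s(x, m) *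
          c.col y s(K.getVert (K.length - 1), y)) * hbase
        + (-(a ^ 2)) * ih3
        + ((-1 : ℤ) ^ K.length * a ^ 2) * hCm2

/-- For an antiproper edge coloring `γ` of `Σ` and a nonzero magnitude `a`, the
magnitude graph `Σ_a` is antibalanced: every circle in it has sign `(-1)^length`.
Conversely, every antibalanced signed graph admits an antiproper edge coloring using
only the two colors `+a` and `-a`. -/
theorem antiproper_magGraph_antibalanced {V : Type*} [Fintype V] (G : SimpleGraph V)
    (σ : Sym2 V → ℤ) (hσ : ∀ e ∈ G.edgeSet, σ e = 1 ∨ σ e = -1)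
    (a : ℤ) (ha : a ≠ 0) :
    (∀ c : PColoring G σ, c.Antiproper →
      ∀ (v : V) (W : (magGraph G c.col a).Walk v v), W.IsCycle →
        (W.edges.map σ).prod = (-1) ^ W.length) ∧
    ((∀ (v : V) (W : G.Walk v v), W.IsCycle →
        (W.edges.map σ).prod = (-1) ^ W.length) →
      ∃ c : PColoring G σ,
        (∀ ⦃v w : V⦄, G.Adj v w →
          c.col v s(v, w) = a ∨ c.col v s(v, w) = -a) ∧ c.Antiproper) := by
  constructor
  · -- Part 1
    intro c hap v W hW
    obtain ⟨m, h, P, rfl⟩ := (Walk.not_nil_iff (p := W)).mp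
      (by rw [Walk.nil_iff_length_eq]; have := hW.three_le_length; omega)
    have hP : P.IsPath := ((Walk.cons_isCycle_iff P h).mp hW).1
    have hlen3 : 3 ≤ P.length + 1 := by
      have h9 := hW.three_le_length; rwa [Walk.length_cons] at h9
    have hPnil : ¬ P.Nil := by rw [Walk.nil_iff_length_eq]; omega
    obtain ⟨hA1, hA2, heq⟩ := myLemD G σ hσ a ha c hap P hP hPnil
    set m2 := P.getVert 1 with hm2
    set p := P.getVert (P.length - 1) with hp
    have hvm2 : v ≠ m2 := by
      have h1 := myGetVertNe P hP 1 P.length (by omega) le_rfl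
      rw [Walk.getVert_length] at h1
      exact (Ne.symm h1)
    have hmp : m ≠ p := by
      have h1 := myGetVertNe P hP 0 (P.length - 1) (by omega) (by omega)
      rwa [Walk.getVert_zero] at h1
    have hGvm : G.Adj v m := h.1
    have hGvp : G.Adj v p := hA2.1.symm
    have hGmm2 : G.Adj m m2 := hA1.1
    have hv_pv : c.col v s(v, p) = a ∨ c.col v s(v, p) = -a := by
      have h8 := hA2.2.2
      rwa [show s(p, v) = s(v, p) from Sym2.eq_swap] at h8
    have hveq : c.col v s(v, m) = c.col v s(v, p) :=
      myColEq hap hGvm hGvp hmp h.2.1 hv_pv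
    have hm_mv : c.col m s(m, v) = a ∨ c.col m s(m, v) = -a := by
      have h8 := h.2.2
      rwa [show s(v, m) = s(m, v) from Sym2.eq_swap] at h8
    have hmeq : c.col m s(m, v) = c.col m s(m, m2) :=
      myColEq hap hGvm.symm hGmm2 hvm2 hm_mv hA1.2.1
    rw [← hmeq, show s(m, v) = s(v, m) from (Sym2.eq_swap).symm] at heq
    rw [show s(p, v) = s(v, p) from Sym2.eq_swap, ← hveq] at heq
    -- heq : A * col m s(v,m) * col v s(v,m) = (-1)^P.length * a^2
    have hbase := myEdgeBase hσ h
    have hv2 : c.col v s(v, m) * c.col v s(v, m) = a ^ 2 := by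
      rcases h.2.1 with h2 | h2 <;> rw [h2] <;> ring
    have hm2c : c.col m s(v, m) * c.col m s(v, m) = a ^ 2 := by
      rcases h.2.2 with h2 | h2 <;> rw [h2] <;> ring
    simp only [Walk.edges_cons, List.map_cons, List.prod_cons, Walk.length_cons]
    refine mul_right_cancel₀ (b := a ^ 2 * a ^ 2)
      (mul_ne_zero (pow_ne_zero 2 ha) (pow_ne_zero 2 ha)) ?_
    linear_combination (σ s(v, m) * c.col v s(v, m) * c.col m s(v, m)) * heq
      + ((-1 : ℤ) ^ P.length * a ^ 2) * hbase
      + (-(σ s(v, m) * (P.edges.map σ).prod * (c.col m s(v, m) * c.col m s(v, m)))) * hv2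
      + (-(σ s(v, m) * (P.edges.map σ).prod * a ^ 2)) * hm2c
  · -- Part 2
    intro hbal
    classical
    have hclosed : ∀ (v : V) (W : G.Walk v v), (W.edges.map σ).prod = (-1) ^ W.length :=
      fun v W => myClosed G σ hσ hbal W.length v W le_rfl
    have hτclosed : ∀ (v : V) (W : G.Walk v v),
        (W.edges.map (fun e => -σ e)).prod = 1 := by
      intro v W
      rw [myMapNeg, Walk.length_edges, hclosed v W, ← pow_add]
      exact Even.neg_one_pow ⟨W.length, rfl⟩
    have hpm : ∀ {u w : V} (P : G.Walk u w),
        (P.edges.map (fun e => -σ e)).prod = 1 ∨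
        (P.edges.map (fun e => -σ e)).prod = -1 := by
      intro u w P
      refine myProdPM _ ?_
      intro x hx
      obtain ⟨e, he, rfl⟩ := List.mem_map.mp hx
      rcases hσ e (P.edges_subset_edgeSet he) with h1 | h1 <;> simp [h1]
    have hsame : ∀ {u w : V} (P Q : G.Walk u w),
        (P.edges.map (fun e => -σ e)).prod = (Q.edges.map (fun e => -σ e)).prod := by
      intro u w P Q
      have h1 := hτclosed u (P.append Q.reverse)
      rw [Walk.edges_append, List.map_append, List.prod_append, Walk.edges_reverse,
        List.map_reverse, List.prod_reverse] at h1
      rcases hpm Q with h2 | h2 <;> rw [h2] at h1 <;> rw [h2] <;> omega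
    have hreach : ∀ v : V, G.Reachable ((G.connectedComponentMk v).out) v := by
      intro v
      exact SimpleGraph.ConnectedComponent.exact (Quot.out_eq _)
    set θ : V → ℤ := fun v => (((hreach v).some.edges).map (fun e => -σ e)).prod with hθ
    have hθval : ∀ v, θ v = 1 ∨ θ v = -1 := fun v => hpm _
    have hθwalk : ∀ (v : V) (P : G.Walk ((G.connectedComponentMk v).out) v),
        (P.edges.map (fun e => -σ e)).prod = θ v := fun v P => hsame P (hreach v).some
    have hedge : ∀ {v w : V}, G.Adj v w → θ v * (-σ s(v, w)) = θ w := by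
      intro v w hvw
      have hout : (G.connectedComponentMk v).out = (G.connectedComponentMk w).out :=
        congrArg Quot.out (ConnectedComponent.sound hvw.reachable)
      have hPw := hθwalk w (((hreach v).some.append (Walk.cons hvw Walk.nil)).copy hout rfl)
      rw [Walk.edges_copy, Walk.edges_append] at hPw
      simp only [Walk.edges_cons, Walk.edges_nil, List.map_append, List.prod_append,
        List.map_cons, List.map_nil, List.prod_cons, List.prod_nil, mul_one] at hPw
      rw [hθwalk v (hreach v).some] at hPw
      exact hPw
    refine ⟨⟨fun v _ => a * θ v, ?_⟩, ?_, ?_⟩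
    · intro v w hvw
      show a * θ v = -σ s(v, w) * (a * θ w)
      rw [← hedge hvw]
      rcases hσ s(v, w) (by simpa using hvw) with h2 | h2 <;> rw [h2] <;> ring
    · intro v w hvw
      show a * θ v = a ∨ a * θ v = -a
      rcases hθval v with h2 | h2
      · left; rw [h2, mul_one]
      · right; rw [h2]; ring
    · intro v w x h1 h2 hne
      show a * θ v ≠ -(a * θ v)
      rcases hθval v with h3 | h3 <;> rw [h3] <;> intro hc <;> omega
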